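/- Let p, q be monotone polynomial functions on the naturals with p(x) ≥ 10x and q(x) ≥ 10x for all x ≥ 1, and define f(x) = 20 · 2^{2p(x)} · q(x) · ln(2) · x². Then for every natural number x ≥ 1: x · (f(x) · 2^{q(x)})^x · (1 - 2^{-p(x)})^{f(x) - x + 1} < 1. -/

import Mathlib

set_option maxHeartbeats 2000000 in

/-- Quantitative bound for the probabilistic proof of the exponential model property of
AUF₁⁻: with monotone polynomial-like `p, q ≥ 10x` and
`f x = 20 · 2^{2p(x)} · q(x) · ln 2 · x²`, for every `x ≥ 1`,
`x · (f(x)·2^{q(x)})^x · (1 - 2^{-p(x)})^{f(x)-x+1} < 1`. -/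
theorem auf_model_size_bound (p q : ℕ → ℕ) (hpm : Monotone p) (hqm : Monotone q)
    (hp : ∀ x : ℕ, 1 ≤ x → 10 * x ≤ p x) (hq : ∀ x : ℕ, 1 ≤ x → 10 * x ≤ q x)
    (f : ℕ → ℝ)
    (hf : ∀ x : ℕ, f x = 20 * (2 : ℝ) ^ (2 * p x) * (q x : ℝ) * Real.log 2 * (x : ℝ) ^ 2) :
    ∀ x : ℕ, 1 ≤ x →
      (x : ℝ) * (f x * (2 : ℝ) ^ (q x)) ^ x *
        (1 - (2 : ℝ) ^ (-(p x : ℝ))) ^ (f x - (x : ℝ) + 1) < 1 := by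
  intro x hx
  have hx1 : (1 : ℝ) ≤ (x : ℝ) := by exact_mod_cast hx
  have hX0 : (0 : ℝ) < (x : ℝ) := by linarith
  have hP10 : 10 ≤ p x := le_trans (by omega) (hp x hx)
  have hQ10 : 10 ≤ q x := le_trans (by omega) (hq x hx)
  have hQR : (10 : ℝ) ≤ (q x : ℝ) := by exact_mod_cast hQ10
  have hQpos : (0 : ℝ) < (q x : ℝ) := by linarith
  -- log 2 bounds
  have hL0 : (0.6 : ℝ) ≤ Real.log 2 := le_of_lt (lt_trans (by norm_num) Real.log_two_gt_d9)
  have hL1 : Real.log 2 ≤ 1 := le_of_lt (lt_trans Real.log_two_lt_d9 (by norm_num))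
  have hLpos : (0 : ℝ) < Real.log 2 := by linarith
  have hLlt1 : Real.log 2 < 1 := lt_trans Real.log_two_lt_d9 (by norm_num)
  -- a = 2^(p x)
  set a : ℝ := (2 : ℝ) ^ (p x) with hadef
  have hapos : (0 : ℝ) < a := by positivity
  have ha1 : (1024 : ℝ) ≤ a := by
    calc (1024 : ℝ) = 2 ^ 10 := by norm_num
    _ ≤ 2 ^ (p x) := pow_le_pow_right₀ (by norm_num) hP10
  have haP : (p x : ℝ) + 1 ≤ a := by
    have h := Nat.lt_two_pow_self (n := p x)
    have h' : ((p x : ℕ) : ℝ) + 1 ≤ ((2 ^ (p x) : ℕ) : ℝ) := by exact_mod_cast h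
    simpa [hadef] using h'
  have hy : (2 : ℝ) ^ (-(p x : ℝ)) = a⁻¹ := by
    rw [Real.rpow_neg (by norm_num), Real.rpow_natCast]
  have hy1 : a⁻¹ ≤ 1 := inv_le_one_of_one_le₀ (by linarith)
  have hy0 : 0 ≤ a⁻¹ := by positivity
  -- f x rewritten
  have h2P : (2 : ℝ) ^ (2 * p x) = a * a := by rw [two_mul, pow_add]
  have hfx : f x = 20 * (a * a) * (q x : ℝ) * Real.log 2 * (x : ℝ) ^ 2 := by
    rw [hf x, h2P]
  have hfpos : 0 < f x := by
    rw [hfx]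
    have : (0:ℝ) < 20 * (a * a) := by positivity
    exact mul_pos (mul_pos (mul_pos this hQpos) hLpos) (by positivity)
  have hXX : (x : ℝ) ≤ (x : ℝ) ^ 2 := by nlinarith
  have haa1 : (1 : ℝ) ≤ a * a := by nlinarith
  have haaQ : (10 : ℝ) ≤ (a * a) * (q x : ℝ) := by
    have := mul_le_mul haa1 hQR (by norm_num) (by nlinarith : (0:ℝ) ≤ a * a)
    linarith
  have hcoef : (120 : ℝ) ≤ 20 * (a * a) * (q x : ℝ) * Real.log 2 := by
    have := mul_le_mul haaQ hL0 (by norm_num) (by linarith : (0:ℝ) ≤ (a * a) * (q x : ℝ))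
    linarith
  have hfbig : 120 * (x : ℝ) ^ 2 ≤ f x := by
    rw [hfx]
    have := mul_le_mul_of_nonneg_right hcoef (sq_nonneg (x : ℝ))
    linarith
  have he : 0 ≤ f x - (x : ℝ) + 1 := by nlinarith [hfbig, hXX]
  -- step A: (1 - a⁻¹)^e ≤ exp (-(a⁻¹ * e))
  have hbase : (0 : ℝ) ≤ 1 - a⁻¹ := by linarith
  have hbexp : 1 - a⁻¹ ≤ Real.exp (-a⁻¹) := by
    have := Real.add_one_le_exp (-a⁻¹); linarith
  have hstepA : (1 - a⁻¹) ^ (f x - (x : ℝ) + 1) ≤ Real.exp (-(a⁻¹ * (f x - (x : ℝ) + 1))) := by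
    calc (1 - a⁻¹) ^ (f x - (x : ℝ) + 1)
        ≤ (Real.exp (-a⁻¹)) ^ (f x - (x : ℝ) + 1) := Real.rpow_le_rpow hbase hbexp he
      _ = Real.exp (-(a⁻¹ * (f x - (x : ℝ) + 1))) := by
          rw [← Real.exp_mul]; ring_nf
  -- log computations
  have hApos : 0 < f x * (2 : ℝ) ^ (q x) := mul_pos hfpos (by positivity)
  have hlogA : Real.log (f x * (2 : ℝ) ^ (q x)) = Real.log (f x) + (q x : ℝ) * Real.log 2 := by
    rw [Real.log_mul (ne_of_gt hfpos) (by positivity), Real.log_pow]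
  have hlogf : Real.log (f x) = Real.log 20 + (2 * (p x) : ℝ) * Real.log 2 + Real.log (q x)
      + Real.log (Real.log 2) + 2 * Real.log (x : ℝ) := by
    rw [hf x,
      Real.log_mul (by positivity) (by positivity),
      Real.log_mul (by positivity) (ne_of_gt hLpos),
      Real.log_mul (by positivity) (ne_of_gt hQpos),
      Real.log_mul (by norm_num) (by positivity),
      Real.log_pow, Real.log_pow]
    push_cast
    ring
  -- rewrite goal
  rw [hy]
  have hxApos : 0 < (x : ℝ) * (f x * (2 : ℝ) ^ (q x)) ^ x := mul_pos hX0 (pow_pos hApos x)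
  have h1 : (x : ℝ) * (f x * (2 : ℝ) ^ (q x)) ^ x * (1 - a⁻¹) ^ (f x - (x : ℝ) + 1)
      ≤ (x : ℝ) * (f x * (2 : ℝ) ^ (q x)) ^ x * Real.exp (-(a⁻¹ * (f x - (x : ℝ) + 1))) :=
    mul_le_mul_of_nonneg_left hstepA (le_of_lt hxApos)
  have hxA : (x : ℝ) * (f x * (2 : ℝ) ^ (q x)) ^ x
      = Real.exp (Real.log (x : ℝ) + (x : ℝ) * Real.log (f x * (2 : ℝ) ^ (q x))) := by
    rw [Real.exp_add, Real.exp_log hX0, Real.exp_nat_mul, Real.exp_log hApos]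
  -- the exponent inequality
  have hae : a⁻¹ * f x = 20 * a * (q x : ℝ) * Real.log 2 * (x : ℝ) ^ 2 := by
    rw [hfx]; field_simp
  have hlogX : Real.log (x : ℝ) ≤ (x : ℝ) - 1 := Real.log_le_sub_one_of_pos hX0
  have hlog20 : Real.log 20 ≤ 19 := by
    have := Real.log_le_sub_one_of_pos (show (0:ℝ) < 20 by norm_num); linarith
  have hlogQ : Real.log (q x : ℝ) ≤ (q x : ℝ) - 1 := Real.log_le_sub_one_of_pos hQpos
  have hlogL : Real.log (Real.log 2) < 0 := Real.log_neg hLpos hLlt1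
  have hyX : a⁻¹ * ((x : ℝ) - 1) ≤ (x : ℝ) - 1 := by
    have := mul_le_mul_of_nonneg_right hy1 (show (0:ℝ) ≤ (x : ℝ) - 1 by linarith)
    linarith [this]
  -- Stage 1: bound the "positive" part by X^2 * (23 + 2P + 2Q)
  have hP0 : (0 : ℝ) ≤ (p x : ℝ) := by positivity
  have stage1 : Real.log (x : ℝ)
      + (x : ℝ) * (Real.log 20 + (2 * (p x) : ℝ) * Real.log 2 + Real.log (q x)
        + Real.log (Real.log 2) + 2 * Real.log (x : ℝ) + (q x : ℝ) * Real.log 2)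
      + a⁻¹ * ((x : ℝ) - 1)
      ≤ (x : ℝ) ^ 2 * (23 + 2 * (p x : ℝ) + 2 * (q x : ℝ)) := by
    have b1 : (x : ℝ) * Real.log 20 ≤ 19 * (x : ℝ) ^ 2 := by
      have := mul_le_mul_of_nonneg_left hlog20 (le_of_lt hX0)
      nlinarith
    have b2 : (x : ℝ) * ((2 * (p x) : ℝ) * Real.log 2) ≤ 2 * (p x : ℝ) * (x : ℝ) ^ 2 := by
      have u1 := mul_le_mul_of_nonneg_left hL1 (show (0:ℝ) ≤ 2 * (p x : ℝ) * (x : ℝ) by positivity)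
      have u2 := mul_le_mul_of_nonneg_left hXX (show (0:ℝ) ≤ 2 * (p x : ℝ) by positivity)
      linarith
    have b3 : (x : ℝ) * Real.log (q x : ℝ) ≤ (q x : ℝ) * (x : ℝ) ^ 2 := by
      have u1 := mul_le_mul_of_nonneg_left hlogQ (le_of_lt hX0)
      have u2 := mul_le_mul_of_nonneg_left hXX (show (0:ℝ) ≤ (q x : ℝ) by positivity)
      nlinarith
    have b4 : (x : ℝ) * Real.log (Real.log 2) ≤ 0 :=
      mul_nonpos_of_nonneg_of_nonpos (le_of_lt hX0) (le_of_lt hlogL)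
    have b5 : (x : ℝ) * (2 * Real.log (x : ℝ)) ≤ 2 * (x : ℝ) ^ 2 := by
      have u1 := mul_le_mul_of_nonneg_left hlogX (le_of_lt hX0)
      nlinarith
    have b6 : (x : ℝ) * ((q x : ℝ) * Real.log 2) ≤ (q x : ℝ) * (x : ℝ) ^ 2 := by
      have u1 := mul_le_mul_of_nonneg_left hL1 (show (0:ℝ) ≤ (q x : ℝ) * (x : ℝ) by positivity)
      have u2 := mul_le_mul_of_nonneg_left hXX (show (0:ℝ) ≤ (q x : ℝ) by positivity)
      linarith
    have b0 : Real.log (x : ℝ) ≤ (x : ℝ) ^ 2 := by linarith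
    have b7 : a⁻¹ * ((x : ℝ) - 1) ≤ (x : ℝ) ^ 2 := by linarith
    linarith
  -- Stage 2
  have stage2 : (x : ℝ) ^ 2 * (23 + 2 * (p x : ℝ) + 2 * (q x : ℝ))
      < 20 * a * (q x : ℝ) * Real.log 2 * (x : ℝ) ^ 2 := by
    have key : 23 + 2 * (p x : ℝ) + 2 * (q x : ℝ) < 20 * a * (q x : ℝ) * Real.log 2 := by
      have k1 : 60 * ((p x : ℝ) + 1) ≤ 6 * a * (q x : ℝ) := by
        have := mul_le_mul haP hQR (by norm_num) (by linarith : (0:ℝ) ≤ a)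
        linarith
      have k2 : 6144 * (q x : ℝ) ≤ 6 * a * (q x : ℝ) := by
        have := mul_le_mul_of_nonneg_right ha1 (le_of_lt hQpos)
        linarith
      have k3 : 12 * a * (q x : ℝ) ≤ 20 * a * (q x : ℝ) * Real.log 2 := by
        have := mul_le_mul_of_nonneg_left hL0
          (show (0:ℝ) ≤ 20 * a * (q x : ℝ) by positivity)
        linarith
      linarith
    have := mul_lt_mul_of_pos_left key (show (0:ℝ) < (x : ℝ) ^ 2 by positivity)
    linarith
  -- assemble
  have hexp : Real.log (x : ℝ) + (x : ℝ) * Real.log (f x * (2 : ℝ) ^ (q x))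
      + -(a⁻¹ * (f x - (x : ℝ) + 1)) < 0 := by
    rw [hlogA, hlogf]
    have expand : a⁻¹ * (f x - (x : ℝ) + 1)
        = 20 * a * (q x : ℝ) * Real.log 2 * (x : ℝ) ^ 2 - a⁻¹ * ((x : ℝ) - 1) := by
      rw [← hae]; ring
    rw [expand]
    linarith [stage1, stage2]
  calc (x : ℝ) * (f x * (2 : ℝ) ^ (q x)) ^ x * (1 - a⁻¹) ^ (f x - (x : ℝ) + 1)
      ≤ (x : ℝ) * (f x * (2 : ℝ) ^ (q x)) ^ x * Real.exp (-(a⁻¹ * (f x - (x : ℝ) + 1))) := h1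
    _ = Real.exp (Real.log (x : ℝ) + (x : ℝ) * Real.log (f x * (2 : ℝ) ^ (q x))
          + -(a⁻¹ * (f x - (x : ℝ) + 1))) := by
        rw [Real.exp_add, ← hxA]
    _ < 1 := Real.exp_lt_one_iff.mpr hexp
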